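/- Given a finite set {A_1,…,A_m} of N×N tropical adjacency matrices, there exists a finite sequence i_1,…,i_n with each i_r ∈ {1,…,m} such that A_{i_1} ⊗ A_{i_2} ⊗ ⋯ ⊗ A_{i_n} = 𝟎 if and only if the dependency graphs G(A_1),…,G(A_m) are jointly strongly connected (i.e., G(A_1 ⊕ ⋯ ⊕ A_m) is strongly connected). -/

import Mathlib

open Finset

/-- Square matrices over the binary tropical semiring `{0, -∞} ⊆ ℝ ∪ {-∞}`,
modeled with entries in `WithBot ℝ` (where `⊥` plays the role of `-∞`). -/
abbrev TMat (N : ℕ) := Matrix (Fin N) (Fin N) (WithBot ℝ)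

/-- A tropical adjacency matrix: all entries in `{0, -∞}` and zero diagonal. -/
def IsTropAdj {N : ℕ} (A : TMat N) : Prop :=
  (∀ i j, A i j = 0 ∨ A i j = ⊥) ∧ ∀ i, A i i = 0

/-- Tropical matrix product: `(A ⊗ B) i j = max_l (A i l + B l j)`. -/
def tropMul {N : ℕ} (A B : TMat N) : TMat N :=
  fun i j => Finset.univ.sup fun l => A i l + B l j

/-- The tropical identity matrix (`0` on the diagonal, `-∞` off it). -/
def tropId (N : ℕ) : TMat N := fun i j => if i = j then 0 else ⊥

/-- `k`-fold tropical power. -/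
def tropPow {N : ℕ} (A : TMat N) : ℕ → TMat N
  | 0 => tropId N
  | k + 1 => tropMul A (tropPow A k)

/-- The all-zero tropical matrix `𝟎`. -/
def zeroMat (N : ℕ) : TMat N := fun _ _ => 0

/-- Tropical matrix-vector product for a real vector: `(A ⊗ x) i = max_j (A i j + x j)`. -/
def tropMulVec {N : ℕ} (A : TMat N) (x : Fin N → ℝ) (i : Fin N) : WithBot ℝ :=
  Finset.univ.sup fun j => A i j + (x j : WithBot ℝ)

/-- The maximum of the entries of a real vector, viewed in `WithBot ℝ`. -/
def maxVal {N : ℕ} (x : Fin N → ℝ) : WithBot ℝ :=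
  Finset.univ.sup fun j => (x j : WithBot ℝ)

/-- The edge relation of the dependency graph `G(A)`:
`Edge A i j` means there is an edge `i → j`, i.e. `A j i = 0`. -/
def Edge {N : ℕ} (A : TMat N) (i j : Fin N) : Prop := A j i = 0

/-- Strong connectivity of a digraph on `Fin N` given by its edge relation. -/
def StronglyConnected {N : ℕ} (E : Fin N → Fin N → Prop) : Prop :=
  ∀ i j, Relation.ReflTransGen E i j

/-- `walkLe E k i j`: there is a directed walk from `i` to `j` of length at most `k`. -/
def walkLe {N : ℕ} (E : Fin N → Fin N → Prop) : ℕ → Fin N → Fin N → Prop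
  | 0 => Eq
  | k + 1 => fun i j => walkLe E k i j ∨ ∃ l, E i l ∧ walkLe E k l j

section Aux

variable {N m : ℕ}

/-- Entries are all in `{0, ⊥}`. -/
def Ent01 {N : ℕ} (B : TMat N) : Prop := ∀ i j, B i j = 0 ∨ B i j = ⊥

lemma ent01_le {a : WithBot ℝ} (h : a = 0 ∨ a = ⊥) : a ≤ 0 := by
  rcases h with h | h <;> simp [h]

lemma sup01 {ι : Type*} [Fintype ι] (f : ι → WithBot ℝ) (h : ∀ k, f k = 0 ∨ f k = ⊥) :
    (Finset.univ.sup f = 0 ∨ Finset.univ.sup f = ⊥) ∧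
      (Finset.univ.sup f = 0 ↔ ∃ k, f k = 0) := by
  by_cases hex : ∃ k, f k = 0
  · obtain ⟨k, hk⟩ := hex
    have h0 : Finset.univ.sup f = 0 :=
      le_antisymm (Finset.sup_le fun k _ => ent01_le (h k))
        (by rw [← hk]; exact Finset.le_sup (mem_univ k))
    exact ⟨Or.inl h0, by simp [h0]; exact ⟨k, hk⟩⟩
  · have hb : Finset.univ.sup f = ⊥ := by
      rw [Finset.sup_eq_bot_iff]
      intro k _
      exact (h k).resolve_left fun h0 => hex ⟨k, h0⟩
    refine ⟨Or.inr hb, ?_⟩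
    constructor
    · intro h0; rw [hb] at h0; exact absurd h0 (by simp)
    · intro ⟨k, hk⟩; exact absurd ⟨k, hk⟩ hex

lemma add01 {a b : WithBot ℝ} (ha : a = 0 ∨ a = ⊥) (hb : b = 0 ∨ b = ⊥) :
    (a + b = 0 ∨ a + b = ⊥) ∧ (a + b = 0 ↔ a = 0 ∧ b = 0) := by
  rcases ha with ha | ha <;> rcases hb with hb | hb <;>
    simp [ha, hb]

lemma tropMul_ent01 {B C : TMat N} (hB : Ent01 B) (hC : Ent01 C) : Ent01 (tropMul B C) := by
  intro i j
  exact (sup01 _ fun k => (add01 (hB i k) (hC k j)).1).1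

lemma tropMul_eq_zero_iff {B C : TMat N} (hB : Ent01 B) (hC : Ent01 C) (i j : Fin N) :
    tropMul B C i j = 0 ↔ ∃ k, B i k = 0 ∧ C k j = 0 := by
  rw [show tropMul B C i j = Finset.univ.sup fun l => B i l + C l j from rfl,
    (sup01 _ fun k => (add01 (hB i k) (hC k j)).1).2]
  exact exists_congr fun k => (add01 (hB i k) (hC k j)).2

lemma tropId_ent01 : Ent01 (tropId N) := by
  intro i j
  by_cases h : i = j <;> simp [tropId, h]

/-- The product of the matrices indexed by a list. -/
def Fprod {N m : ℕ} (A : Fin m → TMat N) (l : List (Fin m)) : TMat N :=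
  (l.map A).foldr tropMul (tropId N)

@[simp] lemma Fprod_nil (A : Fin m → TMat N) : Fprod A [] = tropId N := rfl

@[simp] lemma Fprod_cons (A : Fin m → TMat N) (r : Fin m) (l : List (Fin m)) :
    Fprod A (r :: l) = tropMul (A r) (Fprod A l) := rfl

lemma Fprod_ent01 (A : Fin m → TMat N) (hA : ∀ r, IsTropAdj (A r)) (l : List (Fin m)) :
    Ent01 (Fprod A l) := by
  induction l with
  | nil => exact tropId_ent01
  | cons r l ih => exact tropMul_ent01 (hA r).1 ih

lemma Fprod_diag (A : Fin m → TMat N) (hA : ∀ r, IsTropAdj (A r)) (l : List (Fin m))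
    (i : Fin N) : Fprod A l i i = 0 := by
  induction l with
  | nil => simp [tropId]
  | cons r l ih =>
    rw [Fprod_cons, tropMul_eq_zero_iff (hA r).1 (Fprod_ent01 A hA l)]
    exact ⟨i, (hA r).2 i, ih⟩

lemma Fprod_append (A : Fin m → TMat N) (hA : ∀ r, IsTropAdj (A r)) (l₁ l₂ : List (Fin m))
    (i j : Fin N) :
    Fprod A (l₁ ++ l₂) i j = 0 ↔ ∃ k, Fprod A l₁ i k = 0 ∧ Fprod A l₂ k j = 0 := by
  induction l₁ generalizing i with
  | nil =>
    simp only [List.nil_append, Fprod_nil]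
    constructor
    · intro h; exact ⟨i, by simp [tropId], h⟩
    · rintro ⟨k, hk, h⟩
      have : i = k := by by_contra hik; simp [tropId, hik] at hk
      rwa [this]
  | cons r l ih =>
    rw [List.cons_append, Fprod_cons, Fprod_cons,
      tropMul_eq_zero_iff (hA r).1 (Fprod_ent01 A hA _)]
    constructor
    · rintro ⟨k, hk, h⟩
      obtain ⟨k', h1, h2⟩ := (ih k).1 h
      exact ⟨k', (tropMul_eq_zero_iff (hA r).1 (Fprod_ent01 A hA l) i k').2 ⟨k, hk, h1⟩, h2⟩
    · rintro ⟨k, hk, h⟩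
      obtain ⟨k', h1, h2⟩ := (tropMul_eq_zero_iff (hA r).1 (Fprod_ent01 A hA l) i k).1 hk
      exact ⟨k', h1, (ih k').2 ⟨k, h2, h⟩⟩

lemma Fprod_mem (A : Fin m → TMat N) (hA : ∀ r, IsTropAdj (A r)) (l : List (Fin m))
    {r : Fin m} (hr : r ∈ l) {i j : Fin N} (h : A r i j = 0) : Fprod A l i j = 0 := by
  induction l with
  | nil => simp at hr
  | cons s l ih =>
    rw [Fprod_cons, tropMul_eq_zero_iff (hA s).1 (Fprod_ent01 A hA l)]
    rcases List.mem_cons.1 hr with hr | hr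
    · exact ⟨j, hr ▸ h, Fprod_diag A hA l j⟩
    · exact ⟨i, (hA s).2 i, ih hr⟩

/-- `k`-fold concatenation of a list. -/
def repList {m : ℕ} (l0 : List (Fin m)) : ℕ → List (Fin m)
  | 0 => []
  | k + 1 => l0 ++ repList l0 k

end Aux

/-- Given tropical adjacency matrices `A_1, …, A_m`, there is a finite nonempty sequence
of indices whose tropical product is `𝟎` iff the dependency graphs are jointly strongly
connected, i.e. `G(A_1 ⊕ ⋯ ⊕ A_m)` is strongly connected. -/
theorem exists_mortal_sequence_iff_jointly_stronglyConnected {N m : ℕ} (hm : 1 ≤ m)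
    (A : Fin m → TMat N) (hA : ∀ r, IsTropAdj (A r)) :
    (∃ l : List (Fin m), l ≠ [] ∧ (l.map A).foldr tropMul (tropId N) = zeroMat N) ↔
    StronglyConnected (Edge (fun i j => Finset.univ.sup fun r => A r i j)) := by
  set E : Fin N → Fin N → Prop := Edge (fun i j => Finset.univ.sup fun r => A r i j) with hE
  have hEdge : ∀ i j, E i j ↔ ∃ r, A r j i = 0 := by
    intro i j
    rw [hE]
    exact (sup01 (fun r => A r j i) fun r => (hA r).1 j i).2
  constructor
  · rintro ⟨l, -, hl⟩
    have key : ∀ l' : List (Fin m), ∀ i j : Fin N, Fprod A l' j i = 0 →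
        Relation.ReflTransGen E i j := by
      intro l'
      induction l' with
      | nil =>
        intro i j h
        have : j = i := by by_contra hij; simp [Fprod, tropId, hij] at h
        rw [this]
      | cons r l' ih =>
        intro i j h
        rw [Fprod_cons, tropMul_eq_zero_iff (hA r).1 (Fprod_ent01 A hA l')] at h
        obtain ⟨k, hk, h'⟩ := h
        exact (ih i k h').tail ((hEdge k j).2 ⟨r, hk⟩)
    intro i j
    exact key l i j (by rw [show Fprod A l = zeroMat N from hl]; rfl)
  · intro hSC
    set l0 : List (Fin m) := List.finRange m with hl0
    have hl0ne : l0 ≠ [] := by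
      simp [hl0, List.finRange_eq_nil_iff]
      omega
    -- reachability gives a zero entry in some repeated product
    have reach : ∀ i j : Fin N, Relation.ReflTransGen E i j →
        ∃ k, Fprod A (repList l0 k) j i = 0 := by
      intro i j h
      induction h with
      | refl => exact ⟨0, by simp [repList, tropId]⟩
      | tail _ hcj ih =>
        obtain ⟨k, hk⟩ := ih
        refine ⟨k + 1, ?_⟩
        rw [show repList l0 (k + 1) = l0 ++ repList l0 k from rfl,
          Fprod_append A hA]
        obtain ⟨r, hr⟩ := (hEdge _ _).1 hcj
        exact ⟨_, Fprod_mem A hA l0 (by simp [hl0]) hr, hk⟩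
    have mono : ∀ i j : Fin N, ∀ k k' : ℕ, k ≤ k' → Fprod A (repList l0 k) j i = 0 →
        Fprod A (repList l0 k') j i = 0 := by
      intro i j k k' hkk'
      induction k' , hkk' using Nat.le_induction with
      | base => exact id
      | succ k' _ ih =>
        intro h
        rw [show repList l0 (k' + 1) = l0 ++ repList l0 k' from rfl, Fprod_append A hA]
        exact ⟨j, Fprod_diag A hA l0 j, ih h⟩
    rcases Nat.eq_zero_or_pos N with hN | hN
    · refine ⟨l0, hl0ne, ?_⟩
      funext i j
      exact absurd i.2 (by omega)
    · have : ∀ p : Fin N × Fin N, ∃ k, Fprod A (repList l0 k) p.2 p.1 = 0 := fun p =>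
        reach p.1 p.2 (hSC p.1 p.2)
      choose f hf using this
      set K : ℕ := Finset.univ.sup fun p : Fin N × Fin N => f p
      refine ⟨repList l0 (K + 1), ?_, ?_⟩
      · show l0 ++ repList l0 K ≠ []
        simp [hl0ne]
      · funext i j
        show Fprod A (repList l0 (K + 1)) i j = 0
        exact mono j i (f (j, i)) (K + 1)
          (le_trans (Finset.le_sup (mem_univ (j, i))) (Nat.le_succ K)) (hf (j, i))
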